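/- Let λ₂ ≤ λ₃ ≤ λ₄ ≤ λ₅ be nonnegative reals with λ₂+λ₃+λ₄+λ₅ = 3/2 and λ₂²+λ₃²+λ₄²+λ₅² = 3/4. Then −2 Σ_{α=2}^{5} λ_α³ + 3/4 = −(3/2)λ₂ + 6λ₂² − 6λ₂³ − 6(λ₃−1/2)(λ₄−1/2)(λ₅−1/2), and consequently −2 Σ_{α=2}^{5} λ_α³ + 3/4 ≤ −(3/2)λ₂ + 6λ₂² − 6λ₂³ + 6λ₂^{3/2}. -/
import Mathlib


/-- −2 Σ_{α=2}^{5} λ_α³ + 3/4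
= −(3/2)λ₂ + 6λ₂² − 6λ₂³ − 6(λ₃−1/2)(λ₄−1/2)(λ₅−1/2),
and consequently ≤ −(3/2)λ₂ + 6λ₂² − 6λ₂³ + 6λ₂^{3/2}. -/
theorem stmt6 (l2 l3 l4 l5 : ℝ)
    (h2 : 0 ≤ l2) (h23 : l2 ≤ l3) (h34 : l3 ≤ l4) (h45 : l4 ≤ l5)
    (hsum : l2 + l3 + l4 + l5 = 3 / 2)
    (hsq : l2 ^ 2 + l3 ^ 2 + l4 ^ 2 + l5 ^ 2 = 3 / 4) :
    (-2 * (l2 ^ 3 + l3 ^ 3 + l4 ^ 3 + l5 ^ 3) + 3 / 4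
        = -(3 / 2) * l2 + 6 * l2 ^ 2 - 6 * l2 ^ 3
          - 6 * (l3 - 1 / 2) * (l4 - 1 / 2) * (l5 - 1 / 2)) ∧
    -2 * (l2 ^ 3 + l3 ^ 3 + l4 ^ 3 + l5 ^ 3) + 3 / 4
        ≤ -(3 / 2) * l2 + 6 * l2 ^ 2 - 6 * l2 ^ 3 + 6 * l2 ^ ((3 : ℝ) / 2) := by
  have hid : -2 * (l2 ^ 3 + l3 ^ 3 + l4 ^ 3 + l5 ^ 3) + 3 / 4
      = -(3 / 2) * l2 + 6 * l2 ^ 2 - 6 * l2 ^ 3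
        - 6 * (l3 - 1 / 2) * (l4 - 1 / 2) * (l5 - 1 / 2) := by
    linear_combination (3/2 - 3/2*l2 + l2^2 - l2*l3 - l2*l4 - l2*l5 - 2*l3^2 + 2*l3*l4
      + 2*l3*l5 - 2*l4^2 + 2*l4*l5 - 2*l5^2) * hsum + (-3 + 3*l2) * hsq
  refine ⟨hid, ?_⟩
  -- key bounds: (lα - 1/2)^2 ≤ l2 for α = 3,4,5
  set t := Real.sqrt l2 with ht
  have ht0 : 0 ≤ t := Real.sqrt_nonneg _
  have ht2 : t ^ 2 = l2 := Real.sq_sqrt h2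
  have hb : ∀ x : ℝ, (x - 1/2)^2 ≤ l2 → |x - 1/2| ≤ t := by
    intro x hx
    rw [ht, ← Real.sqrt_sq_eq_abs]
    exact Real.sqrt_le_sqrt hx
  -- sum of squared deviations
  have hkey : (l2 - 1/2)^2 + (l3 - 1/2)^2 + (l4 - 1/2)^2 + (l5 - 1/2)^2 = 1/4 := by
    linear_combination hsq - hsum
  have hl2 : l2 * (1 - l2) ≤ l2 := by nlinarith
  have b3 : |l3 - 1/2| ≤ t := hb _ (by nlinarith)
  have b4 : |l4 - 1/2| ≤ t := hb _ (by nlinarith)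
  have b5 : |l5 - 1/2| ≤ t := hb _ (by nlinarith)
  have habs : |(l3 - 1/2) * (l4 - 1/2) * (l5 - 1/2)| ≤ t ^ 3 := by
    rw [abs_mul, abs_mul]
    calc |l3 - 1/2| * |l4 - 1/2| * |l5 - 1/2| ≤ t * t * t := by
          gcongr <;> positivity
      _ = t ^ 3 := by ring
  have hrpow : l2 ^ ((3 : ℝ) / 2) = t ^ 3 := by
    rw [ht, Real.sqrt_eq_rpow, ← Real.rpow_natCast (l2 ^ ((1:ℝ)/2)) 3,
      ← Real.rpow_mul h2]
    norm_num
  rw [hid, hrpow]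
  have := neg_abs_le ((l3 - 1/2) * (l4 - 1/2) * (l5 - 1/2))
  nlinarith [habs, this]
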